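/- One-dimensional Caffarelli contraction: let μ be a probability measure on ℝ with density f(x) = e^{−x²/2 − V(x)} where V is convex. Then the monotone transport map T: ℝ → ℝ defined by μ((−∞, T(x)]) = γ₁((−∞, x]) for all x is a 1-Lipschitz contraction: |T(x) − T(y)| ≤ |x − y| for all x, y ∈ ℝ. -/

import Mathlib

open MeasureTheory Real

/-- `f` has the form `f x = e^{-x²/2 - V x}` with `V : ℝ → ℝ ∪ {∞}` convex; equivalently,
`x ↦ f x · e^{x²/2}` is log-concave (the density is more log-concave than the Gaussian). -/
def RelLogConcave (f : ℝ → ℝ) : Prop :=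
  ∀ x y a b : ℝ, 0 ≤ a → 0 ≤ b → a + b = 1 →
    (f x * Real.exp (x ^ 2 / 2)) ^ a * (f y * Real.exp (y ^ 2 / 2)) ^ b ≤
      f (a * x + b * y) * Real.exp ((a * x + b * y) ^ 2 / 2)

open Set

noncomputable def gau (t : ℝ) : ℝ := (Real.sqrt (2 * π))⁻¹ * Real.exp (-t ^ 2 / 2)

lemma gau_pos (t : ℝ) : 0 < gau t := by
  have : (0:ℝ) < Real.sqrt (2 * π) := Real.sqrt_pos.2 (by positivity)
  exact mul_pos (inv_pos.2 this) (Real.exp_pos _)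

lemma continuous_gau : Continuous gau := by
  unfold gau; fun_prop

lemma integrable_exp_sq : Integrable (fun t : ℝ => Real.exp (-t ^ 2 / 2)) := by
  have h := integrable_exp_neg_mul_sq (b := (1/2 : ℝ)) (by norm_num)
  convert h using 2 with t
  ring_nf

lemma integrable_gau : Integrable gau := integrable_exp_sq.const_mul _

lemma integral_exp_sq : ∫ t : ℝ, Real.exp (-t ^ 2 / 2) = Real.sqrt (2 * π) := by
  have h := integral_gaussian (1/2 : ℝ)
  have : ∀ t : ℝ, Real.exp (-(1/2 : ℝ) * t ^ 2) = Real.exp (-t ^ 2 / 2) := by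
    intro t; congr 1; ring
  rw [show (π / (1/2 : ℝ)) = 2 * π by ring] at h
  rw [← h]
  exact integral_congr_ae (Filter.Eventually.of_forall fun t => (this t).symm)

lemma integral_gau : ∫ t : ℝ, gau t = 1 := by
  have : ∫ t : ℝ, gau t = (Real.sqrt (2 * π))⁻¹ * ∫ t : ℝ, Real.exp (-t ^ 2 / 2) :=
    MeasureTheory.integral_const_mul _ _
  rw [this, integral_exp_sq]
  have : (0:ℝ) < Real.sqrt (2 * π) := Real.sqrt_pos.2 (by positivity)
  field_simp

noncomputable def Phi (x : ℝ) : ℝ := ∫ t in Set.Iic x, gau t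
noncomputable def QQ (x : ℝ) : ℝ := ∫ t in Set.Ioi x, gau t

lemma Phi_add_QQ (x : ℝ) : Phi x + QQ x = 1 := by
  rw [Phi, QQ, intervalIntegral.integral_Iic_add_Ioi integrable_gau.integrableOn
    integrable_gau.integrableOn, integral_gau]

lemma setIntegral_gau_pos {s : Set ℝ} (hs : MeasurableSet s) (h : 0 < volume s) :
    0 < ∫ t in s, gau t := by
  rw [setIntegral_pos_iff_support_of_nonneg_ae
    (Filter.Eventually.of_forall fun t => (gau_pos t).le) integrable_gau.integrableOn]
  have : Function.support gau = Set.univ := by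
    ext t; simp [Function.support, (gau_pos t).ne']
  rw [this, Set.univ_inter]
  exact h

lemma Phi_pos (x : ℝ) : 0 < Phi x :=
  setIntegral_gau_pos measurableSet_Iic (by simp)

lemma QQ_pos (x : ℝ) : 0 < QQ x :=
  setIntegral_gau_pos measurableSet_Ioi (by simp)

lemma Phi_lt_one (x : ℝ) : Phi x < 1 := by
  have := Phi_add_QQ x; have := QQ_pos x; linarith

lemma Phi_sub {x y : ℝ} (h : x ≤ y) :
    Phi y = Phi x + ∫ t in Set.Ioc x y, gau t := by
  rw [Phi, Phi, ← MeasureTheory.setIntegral_union (Set.Iic_disjoint_Ioc le_rfl)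
    measurableSet_Ioc integrable_gau.integrableOn integrable_gau.integrableOn,
    Set.Iic_union_Ioc_eq_Iic h]

lemma Phi_strictMono : StrictMono Phi := by
  intro x y hxy
  rw [Phi_sub hxy.le]
  have : 0 < ∫ t in Set.Ioc x y, gau t := by
    apply setIntegral_gau_pos measurableSet_Ioc
    rw [Real.volume_Ioc]
    exact ENNReal.ofReal_pos.2 (by linarith)
  linarith

lemma QQ_eq (x : ℝ) : QQ x = 1 - Phi x := by have := Phi_add_QQ x; linarith

lemma QQ_strictAnti : StrictAnti QQ := by
  intro x y hxy
  rw [QQ_eq, QQ_eq]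
  have := Phi_strictMono hxy
  linarith

/-- translation for `Iic` set integrals -/
lemma shift_Iic (g : ℝ → ℝ) (c d : ℝ) :
    ∫ x in Set.Iic (c - d), g (x + d) = ∫ x in Set.Iic c, g x := by
  have A : MeasurableEmbedding fun x : ℝ => x + d :=
    (Homeomorph.addRight d).isClosedEmbedding.measurableEmbedding
  have h := A.setIntegral_map (μ := volume) g (Set.Iic c)
  rw [map_add_right_eq_self, Set.preimage_add_const_Iic] at h
  exact h.symm

lemma shift_Ioi (g : ℝ → ℝ) (c d : ℝ) :
    ∫ x in Set.Ioi (c - d), g (x + d) = ∫ x in Set.Ioi c, g x := by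
  have A : MeasurableEmbedding fun x : ℝ => x + d :=
    (Homeomorph.addRight d).isClosedEmbedding.measurableEmbedding
  have h := A.setIntegral_map (μ := volume) g (Set.Ioi c)
  rw [map_add_right_eq_self, Set.preimage_add_const_Ioi] at h
  exact h.symm

-- pointwise two-point inequality for the gaussian kernel
lemma gau_mul_gau {s t u : ℝ} (hst : s ≤ t) (hu : 0 ≤ u) :
    gau s * gau (u + t) ≤ gau t * gau (u + s) := by
  unfold gau
  have hc : (0:ℝ) < (Real.sqrt (2 * π))⁻¹ :=
    inv_pos.2 (Real.sqrt_pos.2 (by positivity))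
  calc (Real.sqrt (2 * π))⁻¹ * Real.exp (-s ^ 2 / 2) *
        ((Real.sqrt (2 * π))⁻¹ * Real.exp (-(u + t) ^ 2 / 2))
      = (Real.sqrt (2 * π))⁻¹ * (Real.sqrt (2 * π))⁻¹ *
        Real.exp (-s ^ 2 / 2 + -(u + t) ^ 2 / 2) := by rw [Real.exp_add]; ring
    _ ≤ (Real.sqrt (2 * π))⁻¹ * (Real.sqrt (2 * π))⁻¹ *
        Real.exp (-t ^ 2 / 2 + -(u + s) ^ 2 / 2) := by
        apply mul_le_mul_of_nonneg_left _ (by positivity)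
        apply Real.exp_le_exp.2
        nlinarith [mul_nonneg hu (sub_nonneg.2 hst)]
    _ = (Real.sqrt (2 * π))⁻¹ * Real.exp (-t ^ 2 / 2) *
        ((Real.sqrt (2 * π))⁻¹ * Real.exp (-(u + s) ^ 2 / 2)) := by rw [Real.exp_add]; ring

lemma QQ_shift (t : ℝ) : QQ t = ∫ u in Set.Ioi (0:ℝ), gau (u + t) := by
  rw [QQ, ← shift_Ioi gau t t, sub_self]

lemma hazard {s t : ℝ} (hst : s ≤ t) : gau s * QQ t ≤ gau t * QQ s := by
  rw [QQ_shift t, QQ_shift s, ← MeasureTheory.integral_const_mul,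
    ← MeasureTheory.integral_const_mul]
  apply setIntegral_mono_on
  · exact ((integrable_gau.comp_add_right t).const_mul _).integrableOn
  · exact ((integrable_gau.comp_add_right s).const_mul _).integrableOn
  · exact measurableSet_Ioi
  · intro u hu
    exact gau_mul_gau hst (le_of_lt hu)

lemma hasDerivAt_Phi (t : ℝ) : HasDerivAt Phi (gau t) t := by
  have hF : HasDerivAt (fun u => ∫ x in (0:ℝ)..u, gau x) (gau t) t :=
    intervalIntegral.integral_hasDerivAt_right
      (integrable_gau.intervalIntegrable)
      (continuous_gau.stronglyMeasurable.stronglyMeasurableAtFilter)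
      continuous_gau.continuousAt
  have heq : ∀ u : ℝ, Phi u = Phi 0 + ∫ x in (0:ℝ)..u, gau x := by
    intro u
    have h := intervalIntegral.integral_Iic_sub_Iic (a := 0) (b := u)
      integrable_gau.integrableOn integrable_gau.integrableOn
    rw [Phi, Phi, ← h]; ring
  have : Phi = fun u => Phi 0 + ∫ x in (0:ℝ)..u, gau x := funext heq
  rw [this]
  simpa using (hF.const_add (Phi 0))

lemma hasDerivAt_QQ (t : ℝ) : HasDerivAt QQ (-gau t) t := by
  have : QQ = fun u => 1 - Phi u := funext QQ_eq
  rw [this]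
  simpa using (hasDerivAt_Phi t).const_sub 1

/-- log-concavity of the Gaussian tail in product form -/
lemma Q_ratio {s t L : ℝ} (hst : s ≤ t) (hL : 0 ≤ L) :
    QQ s * QQ (t + L) ≤ QQ t * QQ (s + L) := by
  set R : ℝ → ℝ := fun u => QQ (u + L) / QQ u with hR
  have hQd : ∀ u : ℝ, HasDerivAt (fun v : ℝ => QQ (v + L)) (-gau (u + L)) u := by
    intro u
    simpa [Function.comp_def] using (hasDerivAt_QQ (u + L)).comp u ((hasDerivAt_id u).add_const L)
  have hRd : ∀ u : ℝ, HasDerivAt R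
      ((-gau (u + L) * QQ u - QQ (u + L) * -gau u) / QQ u ^ 2) u := by
    intro u
    exact (hQd u).div (hasDerivAt_QQ u) (QQ_pos u).ne'
  have hanti : Antitone R := by
    apply antitone_of_deriv_nonpos
    · intro u; exact (hRd u).differentiableAt
    · intro u
      rw [(hRd u).deriv]
      apply div_nonpos_of_nonpos_of_nonneg _ (by positivity)
      have := hazard (s := u) (t := u + L) (by linarith)
      nlinarith
  have h := hanti hst
  rw [hR] at h
  simp only at h
  rw [div_le_div_iff₀ (QQ_pos t) (QQ_pos s)] at h
  nlinarith [h]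

lemma Phi_eq_QQ_neg (t : ℝ) : Phi t = QQ (-t) := by
  rw [Phi, QQ, ← integral_comp_neg_Iic]
  apply setIntegral_congr_fun measurableSet_Iic
  intro u _
  show gau u = gau (-u)
  unfold gau
  congr 2
  ring

/-- the key four-point Gaussian lemma -/
lemma star_lemma {x y a b : ℝ} (hxy : x ≤ y) (hlen : y - x < b - a)
    (h1 : Phi x * Phi b ≤ Phi a * Phi y)
    (h2 : QQ y * QQ a ≤ QQ x * QQ b) : False := by
  set L : ℝ := y - x with hLdef
  have hL : 0 ≤ L := by linarith
  rcases le_or_gt x a with hxa | hax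
  · -- a ≥ x : contradict h2
    have h3 : QQ x * QQ (a + L) ≤ QQ a * QQ (x + L) := Q_ratio hxa hL
    have hxL : x + L = y := by rw [hLdef]; ring
    rw [hxL] at h3
    have h4 : QQ b < QQ (a + L) := QQ_strictAnti (by linarith)
    nlinarith [QQ_pos x, QQ_pos a, QQ_pos y, QQ_pos b]
  · rcases le_or_gt b y with hby | hyb
    · -- a < x, b ≤ y : contradict h1
      have h3 : QQ (-y) * QQ (-b + L) ≤ QQ (-b) * QQ (-y + L) :=
        Q_ratio (by linarith) hL
      rw [show (-b + L : ℝ) = -(b - L) by ring, show (-y + L : ℝ) = -x by rw [hLdef]; ring,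
        ← Phi_eq_QQ_neg, ← Phi_eq_QQ_neg, ← Phi_eq_QQ_neg, ← Phi_eq_QQ_neg] at h3
      have h4 : Phi a < Phi (b - L) := Phi_strictMono (by linarith)
      nlinarith [Phi_pos x, Phi_pos a, Phi_pos y, Phi_pos b]
    · -- a < x, y < b
      have h4 : Phi a < Phi x := Phi_strictMono hax
      have h5 : Phi y < Phi b := Phi_strictMono hyb
      nlinarith [Phi_pos x, Phi_pos a, Phi_pos y, Phi_pos b]

lemma exists_pos_on {f : ℝ → ℝ} (hf0 : ∀ x, 0 ≤ f x) {s : Set ℝ} (hs : MeasurableSet s)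
    (h : 0 < ∫ t in s, f t) : ∃ p ∈ s, 0 < f p := by
  by_contra hc
  push_neg at hc
  have hz : ∀ p ∈ s, f p = 0 := fun p hp => le_antisymm (hc p hp) (hf0 p)
  have h0 : ∫ t in s, f t = 0 := by
    rw [setIntegral_congr_fun (g := fun _ => (0:ℝ)) hs hz]
    simp
  linarith

lemma pos_combo (f : ℝ → ℝ) (hlc : RelLogConcave f) {p q r : ℝ}
    (hpr : p < r) (hrq : r < q) (hp : 0 < f p) (hq : 0 < f q) : 0 < f r := by
  have hqp : (0:ℝ) < q - p := by linarith
  set A := (q - r) / (q - p) with hA_def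
  set B := (r - p) / (q - p) with hB_def
  have hA : 0 < A := div_pos (by linarith) hqp
  have hB : 0 < B := div_pos (by linarith) hqp
  have hAB : A + B = 1 := by
    rw [hA_def, hB_def, ← add_div, div_eq_one_iff_eq hqp.ne']
    ring
  have hcombo : A * p + B * q = r := by
    rw [hA_def, hB_def]
    field_simp
    ring
  have H := hlc p q A B hA.le hB.le hAB
  rw [hcombo] at H
  have hL : 0 < (f p * Real.exp (p ^ 2 / 2)) ^ A * (f q * Real.exp (q ^ 2 / 2)) ^ B :=
    mul_pos (Real.rpow_pos_of_pos (mul_pos hp (Real.exp_pos _)) _)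
      (Real.rpow_pos_of_pos (mul_pos hq (Real.exp_pos _)) _)
  have hpos := lt_of_lt_of_le hL H
  by_contra hcon
  push_neg at hcon
  nlinarith [Real.exp_pos (r ^ 2 / 2)]

lemma aux_mul_exp {u v w : ℝ} : u * Real.exp v ≤ Real.exp w ↔ u ≤ Real.exp (w - v) := by
  rw [Real.exp_sub, le_div_iff₀ (Real.exp_pos v)]

lemma aux_exp_mul {u v w : ℝ} : Real.exp w ≤ u * Real.exp v ↔ Real.exp (w - v) ≤ u := by
  rw [Real.exp_sub, div_le_iff₀ (Real.exp_pos v)]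

lemma secant_bounds (f : ℝ → ℝ) (hf0 : ∀ x, 0 ≤ f x) (hlc : RelLogConcave f)
    {a b : ℝ} (hab : a < b) (hfa : 0 < f a) (hfb : 0 < f b) :
    ∃ κ c : ℝ, 0 < c ∧
      (∀ t, t ≤ a ∨ b ≤ t → f t ≤ c * Real.exp (-(t - κ) ^ 2 / 2)) ∧
      (∀ t ∈ Set.Icc a b, c * Real.exp (-(t - κ) ^ 2 / 2) ≤ f t) := by
  have hba : (0:ℝ) < b - a := by linarith
  have hga : 0 < f a * Real.exp (a ^ 2 / 2) := mul_pos hfa (Real.exp_pos _)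
  have hgb : 0 < f b * Real.exp (b ^ 2 / 2) := mul_pos hfb (Real.exp_pos _)
  set lga := Real.log (f a * Real.exp (a ^ 2 / 2)) with hlga_def
  set lgb := Real.log (f b * Real.exp (b ^ 2 / 2)) with hlgb_def
  set κ := (lgb - lga) / (b - a) with hκ_def
  set α := lga - κ * a with hα_def
  have hκba : κ * (b - a) = lgb - lga := by rw [hκ_def]; field_simp
  refine ⟨κ, Real.exp (α + κ ^ 2 / 2), Real.exp_pos _, ?_, ?_⟩
  · -- upper bound outside (a, b)
    intro t ht
    have hψ : Real.exp (α + κ ^ 2 / 2) * Real.exp (-(t - κ) ^ 2 / 2)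
        = Real.exp (α + κ * t - t ^ 2 / 2) := by
      rw [← Real.exp_add]; congr 1; ring
    rw [hψ]
    rw [show α + κ * t - t ^ 2 / 2 = (α + κ * t) - t ^ 2 / 2 from rfl, ← aux_mul_exp]
    -- goal : f t * exp (t^2/2) ≤ exp (α + κ * t)
    rcases (hf0 t).eq_or_lt with hft | hft
    · rw [← hft, zero_mul]; exact (Real.exp_pos _).le
    have hgt : 0 < f t * Real.exp (t ^ 2 / 2) := mul_pos hft (Real.exp_pos _)
    set lgt := Real.log (f t * Real.exp (t ^ 2 / 2)) with hlgt_def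
    rw [← Real.exp_log hgt, Real.exp_le_exp, ← hlgt_def]
    -- goal : lgt ≤ α + κ * t
    rcases ht with ht | ht
    · rcases ht.eq_or_lt with heq | ht
      · rw [hlgt_def, heq, ← hlga_def, hα_def]
        linarith
      · -- t < a
        have hbt : (0:ℝ) < b - t := by linarith
        set P := (b - a) / (b - t) with hP_def
        set Q := (a - t) / (b - t) with hQ_def
        have hP : 0 < P := div_pos hba hbt
        have hQ : 0 < Q := div_pos (by linarith) hbt
        have hPQ : P + Q = 1 := by
          rw [hP_def, hQ_def, ← add_div, div_eq_one_iff_eq hbt.ne']; ring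
        have hcombo : P * t + Q * b = a := by rw [hP_def, hQ_def]; field_simp; ring
        have H := hlc t b P Q hP.le hQ.le hPQ
        rw [hcombo] at H
        rw [Real.rpow_def_of_pos hgt, Real.rpow_def_of_pos hgb, ← Real.exp_add,
          ← Real.exp_log hga, Real.exp_le_exp] at H
        -- H : lgt * P + lgb * Q ≤ lga
        have hm : lgt * (b - a) + lgb * (a - t) ≤ lga * (b - t) := by
          have := mul_le_mul_of_nonneg_right H hbt.le
          rw [hP_def, hQ_def] at this
          field_simp at this
          linarith
        have heq : α + κ * t = (lga * (b - t) + lgb * (t - a)) / (b - a) := by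
          rw [hα_def, hκ_def]; field_simp; ring
        rw [heq, le_div_iff₀ hba]
        linarith
    · rcases ht.eq_or_lt with heq | ht
      · rw [hlgt_def, ← heq, ← hlgb_def, hα_def]
        nlinarith [hκba]
      · -- b < t
        have hta : (0:ℝ) < t - a := by linarith
        set P := (t - b) / (t - a) with hP_def
        set Q := (b - a) / (t - a) with hQ_def
        have hP : 0 < P := div_pos (by linarith) hta
        have hQ : 0 < Q := div_pos hba hta
        have hPQ : P + Q = 1 := by
          rw [hP_def, hQ_def, ← add_div, div_eq_one_iff_eq hta.ne']; ring
        have hcombo : P * a + Q * t = b := by rw [hP_def, hQ_def]; field_simp; ring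
        have H := hlc a t P Q hP.le hQ.le hPQ
        rw [hcombo] at H
        rw [Real.rpow_def_of_pos hga, Real.rpow_def_of_pos hgt, ← Real.exp_add,
          ← Real.exp_log hgb, Real.exp_le_exp] at H
        -- H : lga * P + lgt * Q ≤ lgb
        have hm : lga * (t - b) + lgt * (b - a) ≤ lgb * (t - a) := by
          have := mul_le_mul_of_nonneg_right H hta.le
          rw [hP_def, hQ_def] at this
          field_simp at this
          linarith
        have heq : α + κ * t = (lga * (b - t) + lgb * (t - a)) / (b - a) := by
          rw [hα_def, hκ_def]; field_simp; ring
        rw [heq, le_div_iff₀ hba]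
        linarith
  · -- lower bound on [a, b]
    intro t ht
    have hψ : Real.exp (α + κ ^ 2 / 2) * Real.exp (-(t - κ) ^ 2 / 2)
        = Real.exp (α + κ * t - t ^ 2 / 2) := by
      rw [← Real.exp_add]; congr 1; ring
    rw [hψ]
    rw [show α + κ * t - t ^ 2 / 2 = (α + κ * t) - t ^ 2 / 2 from rfl, ← aux_exp_mul]
    -- goal : exp (α + κ * t) ≤ f t * exp (t^2/2)
    obtain ⟨hat, htb⟩ := ht
    set P := (b - t) / (b - a) with hP_def
    set Q := (t - a) / (b - a) with hQ_def
    have hP : 0 ≤ P := div_nonneg (by linarith) hba.le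
    have hQ : 0 ≤ Q := div_nonneg (by linarith) hba.le
    have hPQ : P + Q = 1 := by
      rw [hP_def, hQ_def, ← add_div, div_eq_one_iff_eq hba.ne']; ring
    have hcombo : P * a + Q * b = t := by rw [hP_def, hQ_def]; field_simp; ring
    have H := hlc a b P Q hP hQ hPQ
    rw [hcombo] at H
    rw [Real.rpow_def_of_pos hga, Real.rpow_def_of_pos hgb, ← Real.exp_add] at H
    refine le_trans (le_of_eq ?_) H
    congr 1
    rw [hα_def, hκ_def, hP_def, hQ_def]
    field_simp
    ring

lemma sqrt2pi_pos : (0:ℝ) < Real.sqrt (2 * π) := Real.sqrt_pos.2 (by positivity)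

lemma gauss_Iic (s κ : ℝ) :
    ∫ t in Set.Iic s, Real.exp (-(t - κ) ^ 2 / 2) = Real.sqrt (2 * π) * Phi (s - κ) := by
  have h := shift_Iic (fun u => Real.exp (-u ^ 2 / 2)) (s - κ) (-κ)
  simp only [sub_neg_eq_add, sub_add_cancel, ← sub_eq_add_neg] at h
  rw [h]
  have h2 : Phi (s - κ) = (Real.sqrt (2 * π))⁻¹ * ∫ t in Set.Iic (s - κ), Real.exp (-t ^ 2 / 2) := by
    rw [Phi]; exact MeasureTheory.integral_const_mul _ _
  rw [h2, ← mul_assoc, mul_inv_cancel₀ sqrt2pi_pos.ne', one_mul]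

lemma gauss_Ioi (s κ : ℝ) :
    ∫ t in Set.Ioi s, Real.exp (-(t - κ) ^ 2 / 2) = Real.sqrt (2 * π) * QQ (s - κ) := by
  have h := shift_Ioi (fun u => Real.exp (-u ^ 2 / 2)) (s - κ) (-κ)
  simp only [sub_neg_eq_add, sub_add_cancel, ← sub_eq_add_neg] at h
  rw [h]
  have h2 : QQ (s - κ) = (Real.sqrt (2 * π))⁻¹ * ∫ t in Set.Ioi (s - κ), Real.exp (-t ^ 2 / 2) := by
    rw [QQ]; exact MeasureTheory.integral_const_mul _ _
  rw [h2, ← mul_assoc, mul_inv_cancel₀ sqrt2pi_pos.ne', one_mul]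

theorem stmt13 (f : ℝ → ℝ) (hf0 : ∀ x, 0 ≤ f x) (hlc : RelLogConcave f)
    (hint : ∫ x, f x = 1) (T : ℝ → ℝ) (hmono : Monotone T)
    (hT : ∀ x, ∫ t in Set.Iic (T x), f t =
      ∫ t in Set.Iic x, (Real.sqrt (2 * π))⁻¹ * Real.exp (-t ^ 2 / 2)) :
    LipschitzWith 1 T := by
  have hfint : Integrable f := by
    by_contra h
    rw [MeasureTheory.integral_undef h] at hint
    norm_num at hint
  have hTPhi : ∀ z, ∫ t in Set.Iic (T z), f t = Phi z := fun z => hT z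
  -- splitting of the integral of f
  have hsplit : ∀ m : ℝ, (∫ t in Set.Iic m, f t) + ∫ t in Set.Ioi m, f t = 1 := by
    intro m
    rw [intervalIntegral.integral_Iic_add_Ioi hfint.integrableOn hfint.integrableOn, hint]
  have hQf : ∀ z, ∫ t in Set.Ioi (T z), f t = QQ z := by
    intro z
    have := hsplit (T z)
    rw [hTPhi z] at this
    rw [QQ_eq]; linarith
  -- f is positive at every point of the range of T
  have hfT : ∀ z, 0 < f (T z) := by
    intro z
    obtain ⟨p, hp, hfp⟩ := exists_pos_on hf0 measurableSet_Iic
      ((hTPhi z) ▸ Phi_pos z)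
    obtain ⟨q, hq, hfq⟩ := exists_pos_on hf0 measurableSet_Ioi
      ((hQf z) ▸ QQ_pos z)
    have hp' : p ≤ T z := hp
    have hq' : T z < q := hq
    rcases eq_or_lt_of_le hp' with heq | hlt
    · rwa [← heq]
    · exact pos_combo f hlc hlt hq' hfp hfq
  -- the key step
  have key : ∀ x y, x ≤ y → T y - T x ≤ y - x := by
    intro x y hxy
    by_contra hcon
    push_neg at hcon
    set a := T x with ha_def
    set b := T y with hb_def
    have hab : a < b := by linarith
    obtain ⟨κ, c, hc, hupper, hlower⟩ := secant_bounds f hf0 hlc hab (hfT x) (hfT y)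
    have hψint : Integrable (fun t : ℝ => c * Real.exp (-(t - κ) ^ 2 / 2)) := by
      have h1 : Integrable (fun t : ℝ => Real.exp (-(t - κ) ^ 2 / 2)) := by
        simpa using
          (Integrable.comp_sub_right (f := fun u : ℝ => Real.exp (-u ^ 2 / 2)) integrable_exp_sq κ)
      exact h1.const_mul c
    set c' := Real.sqrt (2 * π) * c with hc'_def
    have hc' : 0 < c' := mul_pos sqrt2pi_pos hc
    -- the three integral comparisons
    have ineq1 : Phi x ≤ c' * Phi (a - κ) := by
      rw [← hTPhi x]
      calc ∫ t in Set.Iic a, f t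
          ≤ ∫ t in Set.Iic a, c * Real.exp (-(t - κ) ^ 2 / 2) := by
            apply setIntegral_mono_on hfint.integrableOn hψint.integrableOn measurableSet_Iic
            intro t ht
            exact hupper t (Or.inl ht)
        _ = c * ∫ t in Set.Iic a, Real.exp (-(t - κ) ^ 2 / 2) :=
            MeasureTheory.integral_const_mul _ _
        _ = c' * Phi (a - κ) := by rw [gauss_Iic, hc'_def]; ring
    have ineq2 : QQ y ≤ c' * QQ (b - κ) := by
      rw [← hQf y]
      calc ∫ t in Set.Ioi b, f t
          ≤ ∫ t in Set.Ioi b, c * Real.exp (-(t - κ) ^ 2 / 2) := by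
            apply setIntegral_mono_on hfint.integrableOn hψint.integrableOn measurableSet_Ioi
            intro t ht
            exact hupper t (Or.inr (le_of_lt ht))
        _ = c * ∫ t in Set.Ioi b, Real.exp (-(t - κ) ^ 2 / 2) :=
            MeasureTheory.integral_const_mul _ _
        _ = c' * QQ (b - κ) := by rw [gauss_Ioi, hc'_def]; ring
    have hIocf : ∫ t in Set.Ioc a b, f t = Phi y - Phi x := by
      have hu : (∫ t in Set.Iic a, f t) + ∫ t in Set.Ioc a b, f t = ∫ t in Set.Iic b, f t := by
        rw [← MeasureTheory.setIntegral_union (Set.Iic_disjoint_Ioc le_rfl)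
          measurableSet_Ioc hfint.integrableOn hfint.integrableOn,
          Set.Iic_union_Ioc_eq_Iic hab.le]
      rw [hTPhi x, hTPhi y] at hu
      linarith
    have hIocψ : ∫ t in Set.Ioc a b, c * Real.exp (-(t - κ) ^ 2 / 2)
        = c' * (Phi (b - κ) - Phi (a - κ)) := by
      have hu : (∫ t in Set.Iic a, c * Real.exp (-(t - κ) ^ 2 / 2))
          + ∫ t in Set.Ioc a b, c * Real.exp (-(t - κ) ^ 2 / 2)
          = ∫ t in Set.Iic b, c * Real.exp (-(t - κ) ^ 2 / 2) := by
        rw [← MeasureTheory.setIntegral_union (Set.Iic_disjoint_Ioc le_rfl)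
          measurableSet_Ioc hψint.integrableOn hψint.integrableOn,
          Set.Iic_union_Ioc_eq_Iic hab.le]
      rw [MeasureTheory.integral_const_mul, MeasureTheory.integral_const_mul,
        MeasureTheory.integral_const_mul, gauss_Iic, gauss_Iic] at hu
      rw [MeasureTheory.integral_const_mul, hc'_def]
      ring_nf at hu ⊢
      linarith [hu]
    have ineq3 : c' * (Phi (b - κ) - Phi (a - κ)) ≤ Phi y - Phi x := by
      rw [← hIocf, ← hIocψ]
      apply setIntegral_mono_on hψint.integrableOn hfint.integrableOn measurableSet_Ioc
      intro t ht
      exact hlower t ⟨le_of_lt ht.1, ht.2⟩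
    -- assemble the four-point configuration
    have hAB : Phi (a - κ) < Phi (b - κ) := Phi_strictMono (by linarith)
    have h1 : Phi x * Phi (b - κ) ≤ Phi (a - κ) * Phi y := by
      nlinarith [Phi_pos x, Phi_pos (a - κ), mul_le_mul_of_nonneg_right ineq1 (le_of_lt (sub_pos.2 hAB))]
    have h2 : QQ y * QQ (a - κ) ≤ QQ x * QQ (b - κ) := by
      have e1 : QQ y * (Phi (b - κ) - Phi (a - κ)) ≤ c' * QQ (b - κ) * (Phi (b - κ) - Phi (a - κ)) :=
        mul_le_mul_of_nonneg_right ineq2 (le_of_lt (sub_pos.2 hAB))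
      have e2 : c' * (Phi (b - κ) - Phi (a - κ)) * QQ (b - κ) ≤ (Phi y - Phi x) * QQ (b - κ) :=
        mul_le_mul_of_nonneg_right ineq3 (QQ_pos _).le
      rw [QQ_eq y, QQ_eq x, QQ_eq (a - κ), QQ_eq (b - κ)]
      rw [QQ_eq y, QQ_eq (b - κ)] at e1
      rw [QQ_eq (b - κ)] at e2
      nlinarith [e1, e2]
    exact star_lemma hxy (by linarith : y - x < (b - κ) - (a - κ)) h1 h2
  -- conclude Lipschitz
  rw [lipschitzWith_iff_dist_le_mul]
  intro u v
  rw [Real.dist_eq, Real.dist_eq, NNReal.coe_one, one_mul]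
  rcases le_total u v with h | h
  · rw [abs_sub_comm (T u), abs_of_nonneg (sub_nonneg.2 (hmono h)),
      abs_sub_comm u, abs_of_nonneg (sub_nonneg.2 h)]
    exact key u v h
  · rw [abs_of_nonneg (sub_nonneg.2 (hmono h)), abs_of_nonneg (sub_nonneg.2 h)]
    exact key v u h
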